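/- Let q ∈ ℕ, let G be a finite connected graph with minimum degree δ, and let v ∈ V(G). Then the number of vertices at distance at most 3q+1 from v is at least min{(q+1)(δ+1), |V(G)|}. -/

import Mathlib

open SimpleGraph Set

lemma my_dist_getVert_le {V : Type*} {G : SimpleGraph V} (hconn : G.Connected) {u w : V}
    (p : G.Walk u w) (k : ℕ) : G.dist u (p.getVert k) ≤ k := by
  induction p generalizing k with
  | nil => simp [SimpleGraph.Walk.getVert, SimpleGraph.dist_self]
  | @cons a b c h q ih =>
    cases k with
    | zero => simp [SimpleGraph.Walk.getVert, SimpleGraph.dist_self]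
    | succ k =>
      rw [SimpleGraph.Walk.getVert_cons_succ]
      calc G.dist a (q.getVert k)
          ≤ G.dist a b + G.dist b (q.getVert k) := hconn.dist_triangle
        _ ≤ 1 + k := by
            have h1 : G.dist a b ≤ 1 := by simpa using G.dist_le h.toWalk
            exact Nat.add_le_add h1 (ih k)
        _ = k + 1 := by omega

lemma my_getVert_dist_le {V : Type*} {G : SimpleGraph V} {u w : V}
    (p : G.Walk u w) (k : ℕ) : G.dist (p.getVert k) w ≤ p.length - k := by
  induction p generalizing k with
  | nil => simp [SimpleGraph.Walk.getVert, SimpleGraph.dist_self]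
  | cons h q ih =>
    cases k with
    | zero =>
      simpa [SimpleGraph.Walk.getVert] using G.dist_le (SimpleGraph.Walk.cons h q)
    | succ k =>
      rw [SimpleGraph.Walk.getVert_cons_succ]
      simpa using ih k

lemma my_exists_dist_eq {V : Type*} {G : SimpleGraph V} (hconn : G.Connected)
    (v w : V) {k : ℕ} (hk : k ≤ G.dist v w) : ∃ u, G.dist v u = k := by
  obtain ⟨p, hp⟩ := hconn.exists_walk_length_eq_dist v w
  refine ⟨p.getVert k, le_antisymm (my_dist_getVert_le hconn p k) ?_⟩
  have h1 := my_getVert_dist_le p k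
  have h2 : G.dist v w ≤ G.dist v (p.getVert k) + G.dist (p.getVert k) w :=
    hconn.dist_triangle
  omega

theorem ball_size_lower_bound {V : Type*} [Fintype V]
    (G : SimpleGraph V) (hconn : G.Connected) (δ q : ℕ)
    (hδ : ∀ w, δ ≤ (G.neighborSet w).ncard) (v : V) :
    min ((q + 1) * (δ + 1)) (Fintype.card V) ≤ {u | G.dist v u ≤ 3 * q + 1}.ncard := by
  induction q with
  | zero =>
    have hsub : insert v (G.neighborSet v) ⊆ {u | G.dist v u ≤ 3 * 0 + 1} := by
      intro w hw
      rcases hw with rfl | hw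
      · simp [SimpleGraph.dist_self]
      · have : G.dist v w ≤ 1 := by
          have hw' : G.Adj v w := hw; simpa [SimpleGraph.Adj.toWalk] using G.dist_le hw'.toWalk
        simpa using this
    have hcard : δ + 1 ≤ (insert v (G.neighborSet v)).ncard := by
      rw [Set.ncard_insert_of_notMem (by simp) (Set.toFinite _)]
      exact Nat.add_le_add (hδ v) le_rfl
    calc min ((0 + 1) * (δ + 1)) (Fintype.card V) ≤ δ + 1 := by
          simpa using min_le_left (δ + 1) (Fintype.card V)
      _ ≤ (insert v (G.neighborSet v)).ncard := hcard
      _ ≤ _ := Set.ncard_le_ncard hsub (Set.toFinite _)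
  | succ q ih =>
    by_cases hu : ∃ u, G.dist v u = 3 * q + 3
    · obtain ⟨u, hu⟩ := hu
      set B := {u | G.dist v u ≤ 3 * q + 1} with hB
      set S := insert u (G.neighborSet u) with hS
      have hSdist : ∀ w ∈ S, 3 * q + 2 ≤ G.dist v w ∧ G.dist v w ≤ 3 * q + 4 := by
        intro w hw
        have hwu : G.dist w u ≤ 1 ∧ G.dist u w ≤ 1 := by
          rcases hw with rfl | hw
          · simp [SimpleGraph.dist_self]
          · exact ⟨by simpa [SimpleGraph.Adj.toWalk] using G.dist_le (G.adj_symm hw).toWalk,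
              by have hw' : G.Adj u w := hw; simpa [SimpleGraph.Adj.toWalk] using G.dist_le hw'.toWalk⟩
        have t1 : G.dist v u ≤ G.dist v w + G.dist w u := hconn.dist_triangle
        have t2 : G.dist v w ≤ G.dist v u + G.dist u w := hconn.dist_triangle
        omega
      have hdisj : Disjoint B S := by
        rw [Set.disjoint_left]
        intro w hwB hwS
        have h1 := (hSdist w hwS).1
        have h2 : G.dist v w ≤ 3 * q + 1 := hwB
        omega
      have hsub : B ∪ S ⊆ {w | G.dist v w ≤ 3 * (q + 1) + 1} := by
        intro w hw
        rcases hw with hw | hw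
        · have : G.dist v w ≤ 3 * q + 1 := hw
          simp only [Set.mem_setOf_eq]; omega
        · have := (hSdist w hw).2
          simp only [Set.mem_setOf_eq]; omega
      have hScard : δ + 1 ≤ S.ncard := by
        rw [hS, Set.ncard_insert_of_notMem (by simp) (Set.toFinite _)]
        exact Nat.add_le_add (hδ u) le_rfl
      have hBlt : B.ncard < Fintype.card V := by
        have hsub' : B ⊆ {u}ᶜ := by
          intro w hw
          have hw' : G.dist v w ≤ 3 * q + 1 := hw
          simp only [Set.mem_compl_iff, Set.mem_singleton_iff]
          rintro rfl; omega
        have hle := Set.ncard_le_ncard hsub' (Set.toFinite _)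
        have hc := Set.ncard_add_ncard_compl ({u} : Set V)
        rw [Set.ncard_singleton] at hc
        rw [Nat.card_eq_fintype_card] at hc
        omega
      have hBge : (q + 1) * (δ + 1) ≤ B.ncard := by
        have := ih
        omega
      calc min ((q + 1 + 1) * (δ + 1)) (Fintype.card V)
          ≤ (q + 1 + 1) * (δ + 1) := min_le_left _ _
        _ ≤ B.ncard + S.ncard := by nlinarith
        _ = (B ∪ S).ncard :=
            (Set.ncard_union_eq hdisj (Set.toFinite _) (Set.toFinite _)).symm
        _ ≤ _ := Set.ncard_le_ncard hsub (Set.toFinite _)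
    · have huniv : {w | G.dist v w ≤ 3 * (q + 1) + 1} = Set.univ := by
        ext w
        simp only [Set.mem_setOf_eq, Set.mem_univ, iff_true]
        by_contra h
        push_neg at h
        exact hu (my_exists_dist_eq hconn v w (by omega))
      rw [huniv, Set.ncard_univ, Nat.card_eq_fintype_card]
      exact min_le_right _ _
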